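/- arXiv:1705.02994 — 3 statements merged into one kernel-verified Lean document; each statement's English description precedes it below -/
import Mathlib

section
/- Let R ⊆ ℝ^d be a compact convex set (a polytope, the convex hull of finitely many points) and C ⊆ ℝ^d a convex cone. Define γ_C = max_{‖u‖₂=1} min_{v∈C, ‖v‖₂=1} ⟨u,v⟩. Then min_{x∈R} ‖x‖₂ + (1+γ_C)·max_{x ∈ ext(R)} ‖x − Π_C(x)‖₂ ≥ γ_C · min_{x ∈ ext(R)} ‖x‖₂, where ext(R) is the set of extreme points of R and Π_C(x) is the Euclidean projection of x onto C. -/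
open Metric Set

noncomputable section

/-- Lemma (cone lemma): for `R` a polytope and `C` a closed convex cone,
`min_{x∈R} ‖x‖ + (1+γ_C) max_{x∈ext(R)} ‖x − Π_C(x)‖ ≥ γ_C min_{x∈ext(R)} ‖x‖`,
where `γ_C = max_{‖u‖=1} min_{v∈C,‖v‖=1} ⟨u,v⟩` and `‖x − Π_C(x)‖ = dist(x, C)`. -/
theorem cone_lemma {d : ℕ} (S : Finset (EuclideanSpace ℝ (Fin d))) (hS : S.Nonempty)
    (R : Set (EuclideanSpace ℝ (Fin d))) (hR : R = convexHull ℝ (S : Set (EuclideanSpace ℝ (Fin d))))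
    (C : Set (EuclideanSpace ℝ (Fin d))) (hCc : IsClosed C) (hCne : C.Nonempty)
    (hCcone : Convex ℝ C ∧ ∀ (t : ℝ) (x : EuclideanSpace ℝ (Fin d)), 0 ≤ t → x ∈ C → t • x ∈ C)
    (γ : ℝ)
    (hγ : γ = sSup {a : ℝ | ∃ u : EuclideanSpace ℝ (Fin d), ‖u‖ = 1 ∧
      a = sInf {b : ℝ | ∃ v ∈ C, ‖v‖ = 1 ∧ b = inner ℝ u v}}) :
    γ * sInf {a : ℝ | ∃ x ∈ Set.extremePoints ℝ R, a = ‖x‖} ≤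
      sInf {a : ℝ | ∃ x ∈ R, a = ‖x‖} +
        (1 + γ) * sSup {a : ℝ | ∃ x ∈ Set.extremePoints ℝ R, a = Metric.infDist x C} := by
  set E := Set.extremePoints ℝ R with hE
  set A := {a : ℝ | ∃ u : EuclideanSpace ℝ (Fin d), ‖u‖ = 1 ∧
      a = sInf {b : ℝ | ∃ v ∈ C, ‖v‖ = 1 ∧ b = inner ℝ u v}} with hA
  set m := sInf {a : ℝ | ∃ x ∈ E, a = ‖x‖} with hm
  set D := sSup {a : ℝ | ∃ x ∈ E, a = Metric.infDist x C} with hD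
  set n := sInf {a : ℝ | ∃ x ∈ R, a = ‖x‖} with hn
  have hRne : R.Nonempty := by
    obtain ⟨s, hs⟩ := hS
    exact ⟨s, hR ▸ subset_convexHull ℝ _ hs⟩
  have hES : E ⊆ (S : Set (EuclideanSpace ℝ (Fin d))) := by
    rw [hE, hR]; exact extremePoints_convexHull_subset
  have hEfin : E.Finite := S.finite_toSet.subset hES
  have hRcomp : IsCompact R := by rw [hR]; exact S.finite_toSet.isCompact_convexHull ℝ
  have hRconv : Convex ℝ R := by rw [hR]; exact convex_convexHull ℝ _
  have hREhull : R = convexHull ℝ E := by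
    have h1 := closure_convexHull_extremePoints hRcomp hRconv
    rw [← h1, IsClosed.closure_eq (hEfin.isCompact_convexHull ℝ).isClosed]
  have hEne : E.Nonempty := by
    by_contra h
    rw [not_nonempty_iff_eq_empty] at h
    rw [h, convexHull_empty] at hREhull
    exact hRne.ne_empty hREhull
  -- finiteness of image sets
  have hmsetfin : {a : ℝ | ∃ x ∈ E, a = ‖x‖}.Finite := by
    have : {a : ℝ | ∃ x ∈ E, a = ‖x‖} = (fun x => ‖x‖) '' E := by
      ext a; simp [eq_comm]
    rw [this]; exact hEfin.image _
  have hDsetfin : {a : ℝ | ∃ x ∈ E, a = Metric.infDist x C}.Finite := by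
    have : {a : ℝ | ∃ x ∈ E, a = Metric.infDist x C} = (fun x => Metric.infDist x C) '' E := by
      ext a; simp [eq_comm]
    rw [this]; exact hEfin.image _
  obtain ⟨x0, hx0⟩ := hEne
  have hmsetne : {a : ℝ | ∃ x ∈ E, a = ‖x‖}.Nonempty := ⟨‖x0‖, x0, hx0, rfl⟩
  have hDsetne : {a : ℝ | ∃ x ∈ E, a = Metric.infDist x C}.Nonempty :=
    ⟨Metric.infDist x0 C, x0, hx0, rfl⟩
  have hm0 : 0 ≤ m := le_csInf hmsetne (by rintro a ⟨x, _, rfl⟩; exact norm_nonneg x)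
  have hD0 : 0 ≤ D := le_trans Metric.infDist_nonneg
    (le_csSup hDsetfin.bddAbove ⟨x0, hx0, rfl⟩)
  obtain ⟨y0, hy0⟩ := hRne
  have hnsetne : {a : ℝ | ∃ x ∈ R, a = ‖x‖}.Nonempty := ⟨‖y0‖, y0, hy0, rfl⟩
  have hn0 : 0 ≤ n := le_csInf hnsetne (by rintro a ⟨x, _, rfl⟩; exact norm_nonneg x)
  have hmle : ∀ x ∈ E, m ≤ ‖x‖ := fun x hx =>
    csInf_le ⟨0, by rintro a ⟨y, _, rfl⟩; exact norm_nonneg y⟩ ⟨x, hx, rfl⟩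
  have hDge : ∀ x ∈ E, Metric.infDist x C ≤ D := fun x hx =>
    le_csSup hDsetfin.bddAbove ⟨x, hx, rfl⟩
  -- the inner sets are bounded below by -1
  have hBlb : ∀ u : EuclideanSpace ℝ (Fin d), ‖u‖ = 1 →
      ∀ b ∈ {b : ℝ | ∃ v ∈ C, ‖v‖ = 1 ∧ b = inner ℝ u v}, (-1 : ℝ) ≤ b := by
    rintro u hu b ⟨v, _, hv, rfl⟩
    have := abs_real_inner_le_norm u v
    rw [hu, hv] at this
    simp only [one_mul] at this
    linarith [neg_abs_le (inner ℝ u v : ℝ)]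
  have hAlb : ∀ a ∈ A, (-1 : ℝ) ≤ a := by
    rintro a ⟨u, hu, rfl⟩
    rcases eq_empty_or_nonempty {b : ℝ | ∃ v ∈ C, ‖v‖ = 1 ∧ b = inner ℝ u v} with h | h
    · rw [h, Real.sInf_empty]; norm_num
    · exact le_csInf h (hBlb u hu)
  rcases le_or_gt γ 0 with hγ0 | hγ0
  · -- easy case
    have hγm1 : -1 ≤ γ := by
      rcases eq_empty_or_nonempty A with h | h
      · rw [hγ, h, Real.sSup_empty]; norm_num
      · by_cases hbdd : BddAbove A
        · obtain ⟨a, ha⟩ := h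
          exact le_trans (hAlb a ha) (hγ ▸ le_csSup hbdd ha)
        · rw [hγ, Real.sSup_of_not_bddAbove hbdd]; norm_num
    have h1 : γ * m ≤ 0 := mul_nonpos_of_nonpos_of_nonneg hγ0 hm0
    have h2 : 0 ≤ (1 + γ) * D := mul_nonneg (by linarith) hD0
    linarith
  · -- main case
    have hAne : A.Nonempty ∧ BddAbove A := by
      by_contra h
      have : γ = 0 := by
        rcases (not_and_or.mp h) with h | h
        · rw [hγ, not_nonempty_iff_eq_empty.mp h, Real.sSup_empty]
        · rw [hγ, Real.sSup_of_not_bddAbove h]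
      linarith
    -- key estimate: for all a ∈ A, a * (m - D) ≤ n + D
    have hkey : ∀ a ∈ A, a * (m - D) ≤ n + D := by
      rintro a ⟨u, hu, rfl⟩
      set B := {b : ℝ | ∃ v ∈ C, ‖v‖ = 1 ∧ b = inner ℝ u v} with hB'
      set a := sInf B with ha'
      have haL : -1 ≤ a := by
        rcases eq_empty_or_nonempty B with h | h
        · rw [ha', h, Real.sInf_empty]; norm_num
        · exact le_csInf h (hBlb u hu)
      rcases le_or_gt a 0 with ha0 | ha0
      · rcases le_or_gt (m - D) 0 with h | h
        · nlinarith [(by nlinarith : (a + 1) * (D - m) ≥ 0)]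
        · nlinarith [mul_nonpos_of_nonpos_of_nonneg ha0 h.le]
      -- a > 0 case
      have hxE : ∀ x ∈ E, a * (m - D) - D ≤ inner ℝ u x := by
        intro x hx
        obtain ⟨c, hcC, hcd⟩ := hCc.exists_infDist_eq_dist hCne x
        have hdD : dist x c ≤ D := hcd ▸ hDge x hx
        have hinner_c : a * ‖c‖ ≤ inner ℝ u c := by
          rcases eq_or_ne c 0 with rfl | hc0
          · simp
          · have hcn : (0:ℝ) < ‖c‖ := norm_pos_iff.mpr hc0
            set v := ‖c‖⁻¹ • c with hv
            have hvC : v ∈ C := hCcone.2 _ _ (inv_nonneg.mpr hcn.le) hcC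
            have hvn : ‖v‖ = 1 := by
              rw [hv, norm_smul, norm_inv, norm_norm, inv_mul_cancel₀ hcn.ne']
            have hbmem : (inner ℝ u v : ℝ) ∈ B := ⟨v, hvC, hvn, rfl⟩
            have hle : a ≤ inner ℝ u v := csInf_le ⟨-1, hBlb u hu⟩ hbmem
            have hcv : c = ‖c‖ • v := by
              rw [hv, smul_smul, mul_inv_cancel₀ hcn.ne', one_smul]
            calc a * ‖c‖ = ‖c‖ * a := mul_comm _ _
              _ ≤ ‖c‖ * inner ℝ u v := by nlinarith
              _ = inner ℝ u c := by conv_rhs => rw [hcv, real_inner_smul_right]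
        have hinner_d : -(dist x c) ≤ (inner ℝ u (x - c) : ℝ) := by
          have h1 := abs_real_inner_le_norm u (x - c)
          rw [hu, one_mul] at h1
          have h2 : ‖x - c‖ = dist x c := by rw [dist_eq_norm]
          linarith [neg_abs_le (inner ℝ u (x - c) : ℝ)]
        have hcnorm : ‖x‖ - D ≤ ‖c‖ := by
          have := norm_sub_norm_le x c
          rw [← dist_eq_norm] at this
          linarith
        have hxm : m ≤ ‖x‖ := hmle x hx
        have hsplit : (inner ℝ u x : ℝ) = inner ℝ u c + inner ℝ u (x - c) := by
          rw [← inner_add_right]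
          congr 1
          abel
        rw [hsplit]
        nlinarith
      -- extend to all of R
      have hyR : ∀ y ∈ R, a * (m - D) - D ≤ inner ℝ u y := by
        have hlin : IsLinearMap ℝ (fun z : EuclideanSpace ℝ (Fin d) => (inner ℝ u z : ℝ)) :=
          ⟨fun z w => inner_add_right _ _ _, fun t z => real_inner_smul_right _ _ _⟩
        have hconv : Convex ℝ {z : EuclideanSpace ℝ (Fin d) | a * (m - D) - D ≤ inner ℝ u z} :=
          convex_halfSpace_ge hlin _
        intro y hy
        rw [hREhull] at hy
        exact convexHull_min hxE hconv hy
      have hnge : a * (m - D) - D ≤ n := by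
        apply le_csInf hnsetne
        rintro b ⟨y, hy, rfl⟩
        calc a * (m - D) - D ≤ inner ℝ u y := hyR y hy
          _ ≤ ‖u‖ * ‖y‖ := real_inner_le_norm u y
          _ = ‖y‖ := by rw [hu, one_mul]
      linarith
    have hfinal : γ * (m - D) ≤ n + D := by
      rcases le_or_gt (m - D) 0 with h | h
      · nlinarith
      · have : γ ≤ (n + D) / (m - D) := by
          rw [hγ]
          apply csSup_le hAne.1
          intro a ha
          rw [le_div_iff₀ h]
          exact hkey a ha
        calc γ * (m - D) ≤ ((n + D) / (m - D)) * (m - D) := by nlinarith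
          _ = n + D := div_mul_cancel₀ _ h.ne'
    nlinarith
end
end

section
/- Let X = X₀ + Z ∈ ℝ^{n×d} with maxᵢ ‖Zᵢ‖₂ ≤ δ, and let H₀ ∈ ℝ^{r×d}. Then 𝒟(H₀, X)^{1/2} ≤ 𝒟(H₀, X₀)^{1/2} + δ√r, where 𝒟(A,B) = Σᵢ min_{α ∈ Δⁿ} ‖Aᵢ − Bᵀα‖₂² sums over the r rows of A the squared distances to conv(B). -/
open Metric Set

noncomputable section

def row {n d : ℕ} (M : Matrix (Fin n) (Fin d) ℝ) (i : Fin n) : EuclideanSpace ℝ (Fin d) :=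
  WithLp.toLp 2 (fun j => M i j)

def convRows {n d : ℕ} (M : Matrix (Fin n) (Fin d) ℝ) : Set (EuclideanSpace ℝ (Fin d)) :=
  convexHull ℝ (Set.range (row M))

def cvxDiv {r n d : ℕ} (A : Matrix (Fin r) (Fin d) ℝ) (B : Matrix (Fin n) (Fin d) ℝ) : ℝ :=
  ∑ i, (Metric.infDist (row A i) (convRows B)) ^ 2

lemma row_add {n d : ℕ} (X₀ Z : Matrix (Fin n) (Fin d) ℝ) (i : Fin n) :
    row (X₀ + Z) i = row X₀ i + row Z i := by
  ext j; rfl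

/-- Every point of `convRows X₀` is within `δ` of `convRows (X₀ + Z)`. -/
lemma close_point {n d : ℕ} (δ : ℝ) (X₀ Z : Matrix (Fin n) (Fin d) ℝ)
    (hZ : ∀ i, ‖row Z i‖ ≤ δ) {p : EuclideanSpace ℝ (Fin d)} (hp : p ∈ convRows X₀) :
    ∃ q ∈ convRows (X₀ + Z), dist p q ≤ δ := by
  rw [convRows, convexHull_range_eq_exists_affineCombination] at hp
  obtain ⟨s, w, hw₀, hw₁, rfl⟩ := hp
  refine ⟨s.affineCombination ℝ (row (X₀ + Z)) w, ?_, ?_⟩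
  · exact affineCombination_mem_convexHull hw₀ hw₁
  · rw [Finset.affineCombination_eq_linear_combination _ _ _ hw₁,
      Finset.affineCombination_eq_linear_combination _ _ _ hw₁, dist_eq_norm]
    have : (∑ i ∈ s, w i • row X₀ i) - ∑ i ∈ s, w i • row (X₀ + Z) i
        = ∑ i ∈ s, w i • (-(row Z i)) := by
      rw [← Finset.sum_sub_distrib]
      refine Finset.sum_congr rfl fun i _ => ?_
      rw [row_add, ← smul_sub]
      congr 1
      abel
    rw [this]
    calc ‖∑ i ∈ s, w i • (-(row Z i))‖ ≤ ∑ i ∈ s, ‖w i • (-(row Z i))‖ :=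
          norm_sum_le _ _
      _ ≤ ∑ i ∈ s, w i * δ := by
          refine Finset.sum_le_sum fun i hi => ?_
          rw [norm_smul, norm_neg, Real.norm_eq_abs, abs_of_nonneg (hw₀ i hi)]
          exact mul_le_mul_of_nonneg_left (hZ i) (hw₀ i hi)
      _ = δ := by rw [← Finset.sum_mul, hw₁, one_mul]

lemma infDist_le {n d : ℕ} (δ : ℝ) (hδ : 0 ≤ δ) (X₀ Z : Matrix (Fin n) (Fin d) ℝ)
    (hZ : ∀ i, ‖row Z i‖ ≤ δ) (h : EuclideanSpace ℝ (Fin d)) :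
    infDist h (convRows (X₀ + Z)) ≤ infDist h (convRows X₀) + δ := by
  rcases Nat.eq_zero_or_pos n with hn | hn
  · subst hn
    have he : ∀ (M : Matrix (Fin 0) (Fin d) ℝ), convRows M = ∅ := by
      intro M
      simp [convRows, Set.range_eq_empty]
    rw [he, he, infDist_empty]
    linarith [infDist_empty (x := h) (α := EuclideanSpace ℝ (Fin d))]
  · have hne : (convRows X₀).Nonempty := by
      refine ⟨row X₀ ⟨0, hn⟩, subset_convexHull ℝ _ ?_⟩
      exact Set.mem_range_self _
    refine le_of_forall_pos_le_add fun ε hε => ?_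
    obtain ⟨p, hp, hpd⟩ := (infDist_lt_iff hne).mp
      (lt_add_of_pos_right (infDist h (convRows X₀)) hε)
    obtain ⟨q, hq, hqd⟩ := close_point δ X₀ Z hZ hp
    calc infDist h (convRows (X₀ + Z)) ≤ dist h q := infDist_le_dist_of_mem hq
      _ ≤ dist h p + dist p q := dist_triangle _ _ _
      _ ≤ infDist h (convRows X₀) + ε + δ := by linarith
      _ = infDist h (convRows X₀) + δ + ε := by ring

/-- If `X = X₀ + Z` with row norms of `Z` at most `δ`, then
`𝒟(H₀,X)^{1/2} ≤ 𝒟(H₀,X₀)^{1/2} + δ √r`. -/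
theorem sqrt_cvxDiv_perturb {n r d : ℕ} (δ : ℝ) (hδ : 0 ≤ δ)
    (X₀ X Z : Matrix (Fin n) (Fin d) ℝ) (H₀ : Matrix (Fin r) (Fin d) ℝ)
    (hX : X = X₀ + Z) (hZ : ∀ i, ‖row Z i‖ ≤ δ) :
    Real.sqrt (cvxDiv H₀ X) ≤ Real.sqrt (cvxDiv H₀ X₀) + δ * Real.sqrt r := by
  subst hX
  set u : EuclideanSpace ℝ (Fin r) := WithLp.toLp 2 (fun i => infDist (row H₀ i) (convRows X₀)) with hu
  set v : EuclideanSpace ℝ (Fin r) := WithLp.toLp 2 (fun _ => δ) with hv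
  have hnorm : ∀ x : EuclideanSpace ℝ (Fin r), ‖x‖ = Real.sqrt (∑ i, (x i) ^ 2) := by
    intro x
    rw [EuclideanSpace.norm_eq]
    congr 1
    exact Finset.sum_congr rfl fun i _ => by rw [Real.norm_eq_abs, sq_abs]
  have h1 : Real.sqrt (cvxDiv H₀ (X₀ + Z)) ≤ ‖u + v‖ := by
    rw [hnorm]
    apply Real.sqrt_le_sqrt
    unfold cvxDiv
    refine Finset.sum_le_sum fun i _ => ?_
    have h0 : (0:ℝ) ≤ infDist (row H₀ i) (convRows (X₀ + Z)) := infDist_nonneg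
    have hle : infDist (row H₀ i) (convRows (X₀ + Z)) ≤ (u + v) i :=
      infDist_le δ hδ X₀ Z hZ (row H₀ i)
    have : (u + v) i = u i + v i := rfl
    exact pow_le_pow_left₀ h0 hle 2
  have h2 : ‖u + v‖ ≤ ‖u‖ + ‖v‖ := norm_add_le u v
  have h3 : ‖u‖ = Real.sqrt (cvxDiv H₀ X₀) := by
    rw [hnorm]; rfl
  have h4 : ‖v‖ = δ * Real.sqrt r := by
    rw [hnorm]
    simp only [hv, PiLp.toLp_apply]
    rw [Finset.sum_const, Finset.card_univ, Fintype.card_fin, nsmul_eq_mul,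
      Real.sqrt_mul' _ (sq_nonneg δ), Real.sqrt_sq hδ, mul_comm]
  linarith
end
end

section
/- Let X = X₀ + Z with maxᵢ ‖Zᵢ‖₂ ≤ δ, and suppose Ĥ minimizes 𝒟(H, X) over all H ∈ ℝ^{r×d} satisfying dist(Xᵢ, conv(H)) ≤ δ for all i ≤ n, where 𝒟(H,X) = Σ_{ℓ=1}^r dist(H_ℓ, conv(X))². Assume dist(Xᵢ, conv(H₀)) ≤ δ for all i (so that H₀ is feasible). Then 𝒟(Ĥ, X₀)^{1/2} ≤ 𝒟(H₀, X₀)^{1/2} + 3δ√r. -/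
open Metric Set

noncomputable section

lemma partner {n d : ℕ} {δ : ℝ} (M M' : Matrix (Fin n) (Fin d) ℝ)
    (h : ∀ i, dist (row M i) (row M' i) ≤ δ) :
    ∀ q ∈ convRows M, ∃ q' ∈ convRows M', dist q q' ≤ δ := by
  have hconv : Convex ℝ {q : EuclideanSpace ℝ (Fin d) | ∃ q' ∈ convRows M', dist q q' ≤ δ} := by
    rintro x ⟨x', hx', hxd⟩ y ⟨y', hy', hyd⟩ a b ha hb hab
    refine ⟨a • x' + b • y', (convex_convexHull ℝ _) hx' hy' ha hb hab, ?_⟩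
    calc dist (a • x + b • y) (a • x' + b • y')
        ≤ dist (a • x) (a • x') + dist (b • y) (b • y') := dist_add_add_le _ _ _ _
      _ = |a| * dist x x' + |b| * dist y y' := by
          rw [dist_smul₀, dist_smul₀, Real.norm_eq_abs, Real.norm_eq_abs]
      _ ≤ a * δ + b * δ := by
          rw [abs_of_nonneg ha, abs_of_nonneg hb]
          exact add_le_add (mul_le_mul_of_nonneg_left hxd ha) (mul_le_mul_of_nonneg_left hyd hb)
      _ = δ := by rw [← add_mul, hab, one_mul]
  intro q hq
  refine convexHull_min ?_ hconv hq
  rintro _ ⟨i, rfl⟩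
  exact ⟨row M' i, subset_convexHull ℝ _ (mem_range_self i), h i⟩

lemma infDist_pert {n d : ℕ} {δ : ℝ} (hδ : 0 ≤ δ) (M M' : Matrix (Fin n) (Fin d) ℝ)
    (h : ∀ i, dist (row M i) (row M' i) ≤ δ) (p : EuclideanSpace ℝ (Fin d)) :
    Metric.infDist p (convRows M') ≤ Metric.infDist p (convRows M) + δ := by
  rcases Nat.eq_zero_or_pos n with hn | hn
  · subst hn
    have h1 : convRows M = ∅ := by
      simp [convRows, Set.range_eq_empty]
    have h2 : convRows M' = ∅ := by
      simp [convRows, Set.range_eq_empty]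
    simp [h1, h2, hδ]
  · have hcpt : IsCompact (convRows M) := (Set.finite_range (row M)).isCompact_convexHull ℝ
    have hne : (convRows M).Nonempty :=
      ⟨row M ⟨0, hn⟩, subset_convexHull ℝ _ (mem_range_self _)⟩
    obtain ⟨q, hq, hdq⟩ := hcpt.exists_infDist_eq_dist hne p
    obtain ⟨q', hq', hqq'⟩ := partner M M' h q hq
    calc Metric.infDist p (convRows M') ≤ dist p q' := infDist_le_dist_of_mem hq'
      _ ≤ dist p q + dist q q' := dist_triangle _ _ _
      _ ≤ Metric.infDist p (convRows M) + δ := by rw [hdq]; gcongr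

lemma sqrt_cvxDiv_pert {r n d : ℕ} {δ : ℝ} (hδ : 0 ≤ δ)
    (A : Matrix (Fin r) (Fin d) ℝ) (B B' : Matrix (Fin n) (Fin d) ℝ)
    (h : ∀ i, Metric.infDist (row A i) (convRows B') ≤ Metric.infDist (row A i) (convRows B) + δ) :
    Real.sqrt (cvxDiv A B') ≤ Real.sqrt (cvxDiv A B) + δ * Real.sqrt r := by
  set u : EuclideanSpace ℝ (Fin r) := WithLp.toLp 2 (fun i => Metric.infDist (row A i) (convRows B))
  set v : EuclideanSpace ℝ (Fin r) := WithLp.toLp 2 (fun _ => δ)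
  have hu : Real.sqrt (cvxDiv A B) = ‖u‖ := by
    rw [EuclideanSpace.norm_eq]
    congr 1
    simp [cvxDiv, u, Real.norm_eq_abs, sq_abs]
  have hv : ‖v‖ = δ * Real.sqrt r := by
    rw [EuclideanSpace.norm_eq]
    simp only [v, PiLp.toLp_apply, Real.norm_eq_abs, sq_abs]
    rw [Finset.sum_const, Finset.card_univ, Fintype.card_fin, nsmul_eq_mul,
      Real.sqrt_mul (by positivity), Real.sqrt_sq hδ, mul_comm]
  have h1 : cvxDiv A B' ≤ ‖u + v‖ ^ 2 := by
    rw [EuclideanSpace.norm_eq, Real.sq_sqrt (by positivity)]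
    apply Finset.sum_le_sum
    intro i _
    have h2 : (0:ℝ) ≤ Metric.infDist (row A i) (convRows B') := infDist_nonneg
    have h3 : ‖(u + v) i‖ = u i + δ := by
      have he : (u + v) i = u i + δ := rfl
      rw [he, Real.norm_eq_abs, abs_of_nonneg (add_nonneg infDist_nonneg hδ)]
    rw [h3]
    exact pow_le_pow_left₀ h2 (h i) 2
  calc Real.sqrt (cvxDiv A B') ≤ Real.sqrt (‖u + v‖ ^ 2) := Real.sqrt_le_sqrt h1
    _ = ‖u + v‖ := Real.sqrt_sq (norm_nonneg _)
    _ ≤ ‖u‖ + ‖v‖ := norm_add_le _ _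
    _ = Real.sqrt (cvxDiv A B) + δ * Real.sqrt r := by rw [hu, hv]

/-- If `Ĥ` minimizes `𝒟(H,X)` over all feasible `H` (those with `dist(Xᵢ, conv(H)) ≤ δ` for all
`i`), `H₀` is feasible, and `X = X₀ + Z` with row norms of `Z` at most `δ`, then
`𝒟(Ĥ,X₀)^{1/2} ≤ 𝒟(H₀,X₀)^{1/2} + 3δ√r`. -/
theorem cvxDiv_optimal_bound {n r d : ℕ} (δ : ℝ) (hδ : 0 ≤ δ)
    (X₀ X Z : Matrix (Fin n) (Fin d) ℝ) (H₀ Hhat : Matrix (Fin r) (Fin d) ℝ)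
    (hX : X = X₀ + Z) (hZ : ∀ i, ‖row Z i‖ ≤ δ)
    (hfeasHhat : ∀ i, Metric.infDist (row X i) (convRows Hhat) ≤ δ)
    (hmin : ∀ H : Matrix (Fin r) (Fin d) ℝ,
      (∀ i, Metric.infDist (row X i) (convRows H) ≤ δ) → cvxDiv Hhat X ≤ cvxDiv H X)
    (hfeasH₀ : ∀ i, Metric.infDist (row X i) (convRows H₀) ≤ δ) :
    Real.sqrt (cvxDiv Hhat X₀) ≤ Real.sqrt (cvxDiv H₀ X₀) + 3 * δ * Real.sqrt r := by
  have hd : ∀ i, dist (row X i) (row X₀ i) ≤ δ := by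
    intro i
    have he : row X i - row X₀ i = row Z i := by
      subst hX; ext j; simp [row, Matrix.add_apply]
    rw [dist_eq_norm, he]
    exact hZ i
  have hd' : ∀ i, dist (row X₀ i) (row X i) ≤ δ := by intro i; rw [dist_comm]; exact hd i
  have h1 : Real.sqrt (cvxDiv Hhat X₀) ≤ Real.sqrt (cvxDiv Hhat X) + δ * Real.sqrt r :=
    sqrt_cvxDiv_pert hδ Hhat X X₀ (fun i => infDist_pert hδ X X₀ hd _)
  have h2 : Real.sqrt (cvxDiv Hhat X) ≤ Real.sqrt (cvxDiv H₀ X) :=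
    Real.sqrt_le_sqrt (hmin H₀ hfeasH₀)
  have h3 : Real.sqrt (cvxDiv H₀ X) ≤ Real.sqrt (cvxDiv H₀ X₀) + δ * Real.sqrt r :=
    sqrt_cvxDiv_pert hδ H₀ X₀ X (fun i => infDist_pert hδ X₀ X hd' _)
  have hpos : 0 ≤ δ * Real.sqrt r := mul_nonneg hδ (Real.sqrt_nonneg _)
  linarith
end
end
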